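/- arXiv:1712.01226 — 7 statements merged into one kernel-verified Lean document; each statement's English description precedes it below -/
import Mathlib

section
/- For every probability measure μ on [0,∞), the induced output density f_μ(R) = ∫₀^∞ K(R,r) dμ(r) is a continuous function of R on [0,∞), and it satisfies 0 < f_μ(R) < 1 for every R > 0. -/
open MeasureTheory Real Set intervalIntegral

set_option maxHeartbeats 1000000

/-- Modified Bessel function of the first kind of order zero. -/
noncomputable def I0 (x : ℝ) : ℝ :=
  (1 / π) * ∫ θ in (0:ℝ)..π, Real.exp (x * Real.cos θ)

/-- The kernel `K(R,r) = R e^{-(R²+r²)/2} I₀(rR)`. -/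
noncomputable def Ker (R r : ℝ) : ℝ :=
  R * Real.exp (-(R ^ 2 + r ^ 2) / 2) * I0 (r * R)

/-- Output density induced by an input (amplitude) distribution `μ`. -/
noncomputable def fout (μ : Measure ℝ) (R : ℝ) : ℝ := ∫ r, Ker R r ∂μ

/-- Output entropy `H(μ) = -∫₀^∞ f_μ(R) ln (f_μ(R)/R) dR`. -/
noncomputable def Hout (μ : Measure ℝ) : ℝ :=
  -∫ R in Ioi (0:ℝ), fout μ R * Real.log (fout μ R / R)

lemma contI0aux : Continuous fun p : ℝ × ℝ => Real.exp (p.1 * Real.cos p.2) := by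
  fun_prop

lemma continuous_I0 : Continuous I0 := by
  unfold I0
  have h := continuous_parametric_intervalIntegral_of_continuous' (μ := volume) (f := fun x θ => Real.exp (x * Real.cos θ)) contI0aux 0 π
  exact continuous_const.mul h

lemma I0_pos (x : ℝ) : 0 < I0 x := by
  unfold I0
  have h : 0 < ∫ θ in (0:ℝ)..π, Real.exp (x * Real.cos θ) := by
    apply intervalIntegral_pos_of_pos
    · exact (Continuous.intervalIntegrable (by fun_prop) _ _)
    · exact fun θ => Real.exp_pos _
    · exact Real.pi_pos
  positivity

lemma I0_even (x : ℝ) : I0 (-x) = I0 x := by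
  unfold I0
  congr 1
  have h := intervalIntegral.integral_comp_sub_left (fun θ => Real.exp (x * Real.cos θ)) π (a := 0) (b := π)
  simp only [sub_self, sub_zero] at h
  rw [← h]
  apply intervalIntegral.integral_congr
  intro θ _
  simp [Real.cos_pi_sub, mul_comm]

lemma I0_le_exp {x : ℝ} (hx : 0 ≤ x) : I0 x ≤ Real.exp x := by
  unfold I0
  have h : (∫ θ in (0:ℝ)..π, Real.exp (x * Real.cos θ)) ≤ ∫ _θ in (0:ℝ)..π, Real.exp x := by
    apply intervalIntegral.integral_mono_on Real.pi_pos.le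
      (Continuous.intervalIntegrable (by fun_prop) _ _)
      (Continuous.intervalIntegrable (by fun_prop) _ _)
    intro θ _
    exact Real.exp_le_exp.2 (by nlinarith [Real.cos_le_one θ])
  simp only [intervalIntegral.integral_const, smul_eq_mul, sub_zero] at h
  calc (1/π) * ∫ θ in (0:ℝ)..π, Real.exp (x * Real.cos θ) ≤ (1/π) * (π * Real.exp x) := by
        apply mul_le_mul_of_nonneg_left h (by positivity)
    _ = Real.exp x := by field_simp

lemma cos_le_quad {θ : ℝ} (h0 : 0 ≤ θ) (h1 : θ ≤ π) :
    Real.cos θ ≤ 1 - 2 * θ ^ 2 / π ^ 2 := by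
  have hs : θ / π ≤ Real.sin (θ / 2) := by
    have := Real.mul_le_sin (x := θ / 2) (by linarith) (by linarith)
    calc θ / π = 2 / π * (θ / 2) := by field_simp
      _ ≤ Real.sin (θ / 2) := this
  have hsq := Real.sin_sq_eq_half_sub (θ / 2)
  have h2 : (θ / π) ^ 2 ≤ Real.sin (θ / 2) ^ 2 := by
    apply pow_le_pow_left₀ (by positivity) hs
  have hpi := Real.pi_pos
  rw [hsq] at h2
  have : (2 : ℝ) * (θ / 2) = θ := by ring
  rw [this] at h2
  have hπ2 : (0:ℝ) < π ^ 2 := by positivity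
  rw [div_pow] at h2
  rw [div_le_iff₀ hπ2] at h2
  have key : Real.cos θ ≤ (π ^ 2 - 2 * θ ^ 2) / π ^ 2 := by
    rw [le_div_iff₀ hπ2]; nlinarith
  calc Real.cos θ ≤ (π ^ 2 - 2 * θ ^ 2) / π ^ 2 := key
    _ = 1 - 2 * θ ^ 2 / π ^ 2 := by rw [sub_div, div_self hπ2.ne']

lemma I0_le_gauss {x : ℝ} (hx : 0 < x) : I0 x ≤ Real.exp x * (Real.sqrt (π / (2 * x)) / 2) := by
  have hpi := Real.pi_pos
  set b : ℝ := 2 * x / π ^ 2 with hb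
  have hbpos : 0 < b := by positivity
  have step1 : (∫ θ in (0:ℝ)..π, Real.exp (x * Real.cos θ))
      ≤ ∫ θ in (0:ℝ)..π, Real.exp x * Real.exp (-b * θ ^ 2) := by
    apply intervalIntegral.integral_mono_on Real.pi_pos.le
      (Continuous.intervalIntegrable (by fun_prop) _ _)
      (Continuous.intervalIntegrable (by fun_prop) _ _)
    intro θ hθ
    rw [← Real.exp_add]
    apply Real.exp_le_exp.2
    have hc := cos_le_quad hθ.1 hθ.2
    have : x * Real.cos θ ≤ x * (1 - 2 * θ ^ 2 / π ^ 2) :=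
      mul_le_mul_of_nonneg_left hc hx.le
    calc x * Real.cos θ ≤ x * (1 - 2 * θ ^ 2 / π ^ 2) := this
      _ = x + -b * θ ^ 2 := by rw [hb]; field_simp; ring
  have step2 : (∫ θ in (0:ℝ)..π, Real.exp (-b * θ ^ 2))
      ≤ ∫ θ in Ioi (0:ℝ), Real.exp (-b * θ ^ 2) := by
    rw [intervalIntegral.integral_of_le Real.pi_pos.le]
    apply setIntegral_mono_set (integrable_exp_neg_mul_sq hbpos).integrableOn
    · exact Filter.Eventually.of_forall fun θ => (Real.exp_pos _).le
    · exact HasSubset.Subset.eventuallyLE Ioc_subset_Ioi_self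
  have step3 : (∫ θ in Ioi (0:ℝ), Real.exp (-b * θ ^ 2)) = Real.sqrt (π / b) / 2 :=
    integral_gaussian_Ioi b
  have hsqrt : Real.sqrt (π / b) = π * Real.sqrt (π / (2 * x)) := by
    have : π / b = π ^ 2 * (π / (2 * x)) := by rw [hb]; field_simp
    rw [this, Real.sqrt_mul (by positivity), Real.sqrt_sq hpi.le]
  unfold I0
  calc (1/π) * ∫ θ in (0:ℝ)..π, Real.exp (x * Real.cos θ)
      ≤ (1/π) * ∫ θ in (0:ℝ)..π, Real.exp x * Real.exp (-b * θ ^ 2) := by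
        apply mul_le_mul_of_nonneg_left step1 (by positivity)
    _ = (1/π) * (Real.exp x * ∫ θ in (0:ℝ)..π, Real.exp (-b * θ ^ 2)) := by
        rw [intervalIntegral.integral_const_mul]
    _ ≤ (1/π) * (Real.exp x * (Real.sqrt (π / b) / 2)) := by
        apply mul_le_mul_of_nonneg_left _ (by positivity)
        apply mul_le_mul_of_nonneg_left _ (Real.exp_pos x).le
        rw [← step3]; exact step2
    _ = Real.exp x * (Real.sqrt (π / (2 * x)) / 2) := by
        rw [hsqrt]; field_simp

lemma Ker_pos {R : ℝ} (hR : 0 < R) (r : ℝ) : 0 < Ker R r :=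
  mul_pos (mul_pos hR (Real.exp_pos _)) (I0_pos _)

lemma Ker_le_exp {R r : ℝ} (hR : 0 ≤ R) (hr : 0 ≤ r) :
    Ker R r ≤ R * Real.exp (-(R - r) ^ 2 / 2) := by
  unfold Ker
  have h1 : I0 (r * R) ≤ Real.exp (r * R) := I0_le_exp (by positivity)
  calc R * Real.exp (-(R ^ 2 + r ^ 2) / 2) * I0 (r * R)
      ≤ R * Real.exp (-(R ^ 2 + r ^ 2) / 2) * Real.exp (r * R) := by
        apply mul_le_mul_of_nonneg_left h1 (by positivity)
    _ = R * Real.exp (-(R - r) ^ 2 / 2) := by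
        rw [mul_assoc, ← Real.exp_add]; ring_nf

lemma Ker_le {R r : ℝ} (hR : 0 ≤ R) (hr : 0 ≤ r) : Ker R r ≤ 9 / 10 := by
  rcases hR.eq_or_lt with h0 | hRpos
  · simp [Ker, ← h0]; norm_num
  by_cases hr5 : r ≤ 2 / 5
  · -- Case A : r small, use I0 ≤ exp
    have hb := Ker_le_exp hRpos.le hr
    rcases le_or_gt R (9/10) with hR9 | hR9
    · calc Ker R r ≤ R * Real.exp (-(R - r) ^ 2 / 2) := hb
        _ ≤ R * 1 := mul_le_mul_of_nonneg_left
            (Real.exp_le_one_iff.2 (by nlinarith)) hRpos.le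
        _ ≤ 9/10 := by linarith
    rcases le_or_gt R 1 with hR1 | hR1
    · -- 9/10 < R ≤ 1
      have h8 : Real.exp (-(R - r) ^ 2 / 2) ≤ Real.exp (-(1/8 : ℝ)) := by
        apply Real.exp_le_exp.2; nlinarith
      have h9 : Real.exp (-(1/8 : ℝ)) ≤ 9/10 := by
        have h : (10:ℝ)/9 ≤ Real.exp (1/8) := by
          nlinarith [Real.add_one_le_exp (1/8 : ℝ)]
        have hy : (0:ℝ) ≤ (Real.exp (1/8:ℝ))⁻¹ := inv_nonneg.2 (Real.exp_pos _).le
        have hyx : Real.exp (1/8:ℝ) * (Real.exp (1/8:ℝ))⁻¹ = 1 :=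
          mul_inv_cancel₀ (Real.exp_pos _).ne'
        rw [Real.exp_neg]
        nlinarith [mul_le_mul_of_nonneg_right h hy]
      calc Ker R r ≤ R * Real.exp (-(R - r) ^ 2 / 2) := hb
        _ ≤ 1 * (9/10) := mul_le_mul hR1 (h8.trans h9) (Real.exp_pos _).le one_pos.le
        _ = 9/10 := by ring
    · -- R > 1
      have hmono : Real.exp (-(R - r) ^ 2 / 2) ≤ Real.exp (-(R - 2/5) ^ 2 / 2) :=
        Real.exp_le_exp.2 (by nlinarith)
      set u := Real.sqrt R with hu
      have hu0 : 0 ≤ u := Real.sqrt_nonneg R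
      have hu2 : u ^ 2 = R := Real.sq_sqrt hRpos.le
      have hu1 : 1 ≤ u := by nlinarith
      have hlogR : Real.log R ≤ 2 * (u - 1) := by
        have h1 : Real.log u ≤ u - 1 := Real.log_le_sub_one_of_pos (by linarith)
        have h2 : Real.log u = Real.log R / 2 := Real.log_sqrt hRpos.le
        linarith
      have hlog19 : Real.log ((10:ℝ)/9) ≤ 1/9 := by
        have := Real.log_le_sub_one_of_pos (show (0:ℝ) < 10/9 by norm_num); linarith
      have hupoly : 2 * (u - 1) + 1/9 ≤ (u ^ 2 - 2/5) ^ 2 / 2 := by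
        nlinarith [sq_nonneg (u - 1), sq_nonneg (u ^ 2 - 9/7), sq_nonneg ((u - 1) * (u + 1)),
          sq_nonneg (u ^ 2 - u), sq_nonneg (u - 9/8)]
      have hkey : (10:ℝ)/9 * R ≤ Real.exp ((R - 2/5) ^ 2 / 2) := by
        rw [← Real.exp_log (show (0:ℝ) < 10/9 * R by positivity)]
        apply Real.exp_le_exp.2
        rw [Real.log_mul (by norm_num) hRpos.ne']
        have : (R - 2/5) ^ 2 / 2 = (u ^ 2 - 2/5) ^ 2 / 2 := by rw [hu2]
        rw [this]
        linarith
      have hy : (0:ℝ) ≤ (Real.exp ((R - 2/5) ^ 2 / 2))⁻¹ := inv_nonneg.2 (Real.exp_pos _).le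
      have hyx : Real.exp ((R - 2/5) ^ 2 / 2) * (Real.exp ((R - 2/5) ^ 2 / 2))⁻¹ = 1 :=
        mul_inv_cancel₀ (Real.exp_pos _).ne'
      calc Ker R r ≤ R * Real.exp (-(R - r) ^ 2 / 2) := hb
        _ ≤ R * Real.exp (-(R - 2/5) ^ 2 / 2) :=
            mul_le_mul_of_nonneg_left hmono hRpos.le
        _ ≤ 9/10 := by
            have hrw : -(R - 2/5) ^ 2 / 2 = -((R - 2/5) ^ 2 / 2) := by ring
            rw [hrw, Real.exp_neg]
            nlinarith [mul_le_mul_of_nonneg_right hkey hy]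
  · -- Case B : r > 2/5, use Gaussian bound on I0
    push_neg at hr5
    have hx : 0 < r * R := by positivity
    have hg := I0_le_gauss hx
    set S := Real.sqrt (π / (2 * (r * R))) with hSdef
    have hS0 : 0 ≤ S := Real.sqrt_nonneg _
    have hS2 : S ^ 2 = π / (2 * (r * R)) := Real.sq_sqrt (by positivity)
    set X := R * Real.exp (-(R - r) ^ 2 / 2) * (S / 2) with hXdef
    have hXnn : 0 ≤ X := by positivity
    have hbX : Ker R r ≤ X := by
      unfold Ker
      calc R * Real.exp (-(R ^ 2 + r ^ 2) / 2) * I0 (r * R)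
          ≤ R * Real.exp (-(R ^ 2 + r ^ 2) / 2) * (Real.exp (r * R) * (S / 2)) := by
            apply mul_le_mul_of_nonneg_left hg (by positivity)
        _ = X := by
            rw [hXdef]
            have : Real.exp (-(R ^ 2 + r ^ 2) / 2) * Real.exp (r * R)
                = Real.exp (-(R - r) ^ 2 / 2) := by rw [← Real.exp_add]; ring_nf
            calc R * Real.exp (-(R ^ 2 + r ^ 2) / 2) * (Real.exp (r * R) * (S / 2))
                = R * (Real.exp (-(R ^ 2 + r ^ 2) / 2) * Real.exp (r * R)) * (S / 2) := by ring
              _ = R * Real.exp (-(R - r) ^ 2 / 2) * (S / 2) := by rw [this]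
    have hexpsq : Real.exp (-(R - r) ^ 2 / 2) ^ 2 = Real.exp (-(R - r) ^ 2) := by
      rw [sq, ← Real.exp_add]; ring_nf
    have hX2 : X ^ 2 = π * R / (8 * r) * Real.exp (-(R - r) ^ 2) := by
      rw [hXdef, mul_pow, mul_pow, hexpsq, div_pow, hS2]
      field_simp
      ring
    have he : Real.exp (-(R - r) ^ 2) ≤ (1 + (R - r) ^ 2)⁻¹ := by
      have h1 : 1 + (R - r) ^ 2 ≤ Real.exp ((R - r) ^ 2) := by
        nlinarith [Real.add_one_le_exp ((R - r) ^ 2)]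
      rw [Real.exp_neg]
      exact inv_anti₀ (by positivity) h1
    have hfin : X ^ 2 ≤ 81 / 100 := by
      rw [hX2]
      calc π * R / (8 * r) * Real.exp (-(R - r) ^ 2)
          ≤ π * R / (8 * r) * (1 + (R - r) ^ 2)⁻¹ := by
            apply mul_le_mul_of_nonneg_left he (by positivity)
        _ = π * R / (8 * r * (1 + (R - r) ^ 2)) := by
            rw [← div_eq_mul_inv, div_div]
        _ ≤ 81/100 := by
            rw [div_le_iff₀ (by positivity)]
            have hrpos : (0:ℝ) < r := by linarith
            have key : 2592 * (r * (648 * (r * (1 + (R - r) ^ 2)) - 315 * R))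
                = (1296 * r * (R - r) - 315) ^ 2 - 99225 + 863136 * r ^ 2 := by ring
            have hr2 : (99225:ℝ) ≤ 863136 * r ^ 2 := by
              nlinarith [mul_nonneg (show (0:ℝ) ≤ r - 2/5 by linarith)
                (show (0:ℝ) ≤ r + 2/5 by linarith)]
            have hprod : 0 ≤ r * (648 * (r * (1 + (R - r) ^ 2)) - 315 * R) := by
              linarith [key, sq_nonneg (1296 * r * (R - r) - 315), hr2]
            have h315 : 315 * R ≤ 648 * (r * (1 + (R - r) ^ 2)) := by
              have := (mul_nonneg_iff_of_pos_left hrpos).mp hprod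
              linarith
            nlinarith [mul_le_mul_of_nonneg_right Real.pi_lt_d2.le hRpos.le, h315]
    calc Ker R r ≤ X := hbX
      _ ≤ 9/10 := by nlinarith [hfin, hXnn]


lemma continuous_Ker : Continuous fun p : ℝ × ℝ => Ker p.1 p.2 := by
  unfold Ker
  apply Continuous.mul
  · apply Continuous.mul continuous_fst
    apply Real.continuous_exp.comp
    fun_prop
  · exact continuous_I0.comp (continuous_snd.mul continuous_fst)

lemma Ker_abs (R r : ℝ) : |Ker R r| = Ker |R| r := by
  unfold Ker
  rw [abs_mul, abs_mul, abs_of_pos (I0_pos _), abs_of_pos (Real.exp_pos _), sq_abs]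
  rcases abs_cases R with h | h
  · rw [h.1]
  · rw [h.1]
    congr 1
    rw [mul_neg, I0_even]

theorem stmt_4 (μ : Measure ℝ) (hμ : IsProbabilityMeasure μ) (hsupp : μ (Iio 0) = 0) :
    ContinuousOn (fout μ) (Ici 0) ∧
    ∀ R : ℝ, 0 < R → 0 < fout μ R ∧ fout μ R < 1 := by
  have hae : ∀ᵐ r ∂μ, 0 ≤ r := by
    rw [ae_iff]
    have hset : {a : ℝ | ¬ 0 ≤ a} = Iio 0 := by ext a; simp [not_le]
    rw [hset]; exact hsupp
  have hmeas : ∀ R : ℝ, AEStronglyMeasurable (fun r => Ker R r) μ := fun R =>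
    (continuous_Ker.comp (continuous_const.prodMk continuous_id)).aestronglyMeasurable
  have hbound : ∀ R : ℝ, ∀ᵐ r ∂μ, ‖Ker R r‖ ≤ 9/10 := fun R =>
    hae.mono fun r hr => by
      rw [Real.norm_eq_abs, Ker_abs]
      exact Ker_le (abs_nonneg R) hr
  have hint : ∀ R : ℝ, Integrable (fun r => Ker R r) μ := fun R =>
    Integrable.mono' (integrable_const _) (hmeas R) (hbound R)
  constructor
  · have hcont : Continuous (fout μ) := by
      apply continuous_of_dominated hmeas hbound (integrable_const _)
      exact Filter.Eventually.of_forall fun r =>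
        continuous_Ker.comp (continuous_id.prodMk continuous_const)
    exact hcont.continuousOn
  · intro R hR
    constructor
    · refine (integral_pos_iff_support_of_nonneg_ae ?_ (hint R)).2 ?_
      · exact Filter.Eventually.of_forall fun r => (Ker_pos hR r).le
      · have hsup : Function.support (fun r => Ker R r) = univ :=
          eq_univ_iff_forall.2 fun r => (Ker_pos hR r).ne'
        rw [hsup, measure_univ]
        exact one_pos
    · have hle : fout μ R ≤ 9/10 := by
        have h := integral_mono_ae (hint R) (integrable_const (9/10 : ℝ))
          (hae.mono fun r hr => Ker_le hR.le hr)
        simpa [fout, MeasureTheory.integral_const, measure_univ] using h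
      linarith
end

section
/- For every x > 0 and every a ∈ (0,1), I₀(x) < e^x·( â·(1 − e^{-2ax})/(π·x) + erf(√(2ax))/√(2πx) + e^{-2ax} ), where â = (1/√(1−a) − 1)/(2√a). -/
open MeasureTheory Real Set

/-- The error function `erf(x) = (2/√π) ∫₀^x e^{-t²} dt`. -/
noncomputable def erf (x : ℝ) : ℝ :=
  (2 / Real.sqrt π) * ∫ t in (0:ℝ)..x, Real.exp (-t ^ 2)

/-- Core pointwise inequality: `1/√(1-t²) ≤ 1 + c t` on `[0, √a]`, in product form. -/
lemma aux_core (a t s : ℝ) (ha : 0 < a) (ha1 : a < 1)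
    (ht0 : 0 ≤ t) (htb : t ≤ Real.sqrt a) (hs0 : 0 ≤ s) (hs1 : s ≤ 1)
    (hst : s^2 = 1 - t^2) :
    1 ≤ s * (1 + ((1 / Real.sqrt (1 - a) - 1) / Real.sqrt a) * t) := by
  set b := Real.sqrt a with hbdef
  set β := Real.sqrt (1 - a) with hβdef
  set c := (1/β - 1)/b with hcdef
  have hb0 : 0 < b := Real.sqrt_pos.2 ha
  have hb2 : b^2 = a := Real.sq_sqrt ha.le
  have hβ0 : 0 < β := Real.sqrt_pos.2 (by linarith)
  have hβ2 : β^2 = 1 - a := Real.sq_sqrt (by linarith)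
  have hβ1 : β ≤ 1 := by nlinarith
  have hc0 : 0 ≤ c := by
    apply div_nonneg _ hb0.le
    have : 1 ≤ 1/β := by rw [le_div_iff₀ hβ0]; linarith
    linarith
  have hc : c * (β * (1+β)) = b := by
    rw [hcdef]
    field_simp
    nlinarith
  have ht2 : t^2 ≤ a := by nlinarith
  have hsβ : β ≤ s := by nlinarith
  have h1 : c * (β*(1+β)) ≤ c * (s*(1+s)) := by
    nlinarith [mul_nonneg (mul_nonneg hc0 (sub_nonneg.2 hsβ)) (by linarith : (0:ℝ) ≤ 1 + s + β)]
  have h2 : t ≤ c * (s*(1+s)) := by linarith [hc ▸ h1, htb]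
  have h3 : t*t ≤ c * (s*(1+s)) * t := mul_le_mul_of_nonneg_right h2 ht0
  nlinarith [h3, hst, hs0, hs1]

/-- Gaussian integral in terms of `erf`. -/
lemma aux_gauss (x a : ℝ) (hx : 0 < x) (ha : 0 < a) :
    ∫ t in (0:ℝ)..(Real.sqrt a), Real.exp (-2*x*t^2)
      = Real.sqrt π / (2*Real.sqrt (2*x)) * erf (Real.sqrt (2*a*x)) := by
  set k := Real.sqrt (2*x) with hk
  have hk0 : 0 < k := Real.sqrt_pos.2 (by linarith)
  have hk2 : k^2 = 2*x := Real.sq_sqrt (by linarith)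
  have hkb : k * Real.sqrt a = Real.sqrt (2*a*x) := by
    rw [← Real.sqrt_mul (by linarith) a]
    congr 1; ring
  have h := intervalIntegral.smul_integral_comp_mul_left (a := (0:ℝ)) (b := Real.sqrt a)
    (f := fun s => Real.exp (-s^2)) k
  have hint : ∀ t : ℝ, Real.exp (-(k*t)^2) = Real.exp (-2*x*t^2) := by
    intro t; congr 1; nlinarith [hk2]
  rw [mul_zero] at h
  simp only [hint, smul_eq_mul] at h
  rw [hkb] at h
  unfold erf
  have hπ : (0:ℝ) < Real.sqrt π := Real.sqrt_pos.2 Real.pi_pos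
  rw [← h]
  field_simp

/-- Moment integral. -/
lemma aux_mom (x b : ℝ) (hx : 0 < x) :
    ∫ t in (0:ℝ)..b, t * Real.exp (-2*x*t^2) = (1 - Real.exp (-2*x*b^2))/(4*x) := by
  have h : ∀ t ∈ uIcc (0:ℝ) b,
      HasDerivAt (fun t => -(Real.exp (-2*x*t^2)/(4*x))) (t * Real.exp (-2*x*t^2)) t := by
    intro t _
    have h1 : HasDerivAt (fun t : ℝ => -2*x*t^2) (-2*x*(2*t)) t := by
      simpa using (hasDerivAt_pow 2 t).const_mul (-2*x)
    have h2 := ((h1.exp).div_const (4*x)).neg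
    have heq : -(Real.exp (-2*x*t^2) * (-2*x*(2*t)) / (4*x)) = t * Real.exp (-2*x*t^2) := by
      field_simp; ring
    rwa [heq] at h2
  rw [intervalIntegral.integral_eq_sub_of_hasDerivAt h (by
    apply Continuous.intervalIntegrable; continuity)]
  field_simp
  ring_nf; rw [Real.exp_zero]; ring

/-- Change of variables `t = sin u`. -/
lemma aux_sub (b : ℝ) (hb0 : 0 ≤ b) (hb1 : b ≤ 1) (g : ℝ → ℝ) (hg : Continuous g) :
    ∫ u in (0:ℝ)..(Real.arcsin b), Real.cos u * g (Real.sin u) = ∫ t in (0:ℝ)..b, g t := by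
  have h := intervalIntegral.integral_comp_smul_deriv (a := (0:ℝ)) (b := Real.arcsin b)
    (f := Real.sin) (f' := Real.cos) (fun u _ => Real.hasDerivAt_sin u)
    Real.continuousOn_cos hg
  simpa [Real.sin_arcsin (by linarith : (-1:ℝ) ≤ b) hb1, smul_eq_mul, Function.comp] using h

set_option maxHeartbeats 1000000 in
theorem stmt_10 (x a : ℝ) (hx : 0 < x) (ha : 0 < a) (ha1 : a < 1) :
    I0 x < Real.exp x *
      (((1 / Real.sqrt (1 - a) - 1) / (2 * Real.sqrt a)) * (1 - Real.exp (-2 * a * x)) / (π * x)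
        + erf (Real.sqrt (2 * a * x)) / Real.sqrt (2 * π * x)
        + Real.exp (-2 * a * x)) := by
  have hπ : (0:ℝ) < π := Real.pi_pos
  set b := Real.sqrt a with hbdef
  set β := Real.sqrt (1 - a) with hβdef
  have hb0 : 0 < b := Real.sqrt_pos.2 ha
  have hb2 : b^2 = a := Real.sq_sqrt ha.le
  have hb1 : b < 1 := by nlinarith
  set u₀ := Real.arcsin b with hu₀def
  have hu00 : 0 < u₀ := Real.arcsin_pos.2 hb0
  have hu0half : u₀ < π/2 := Real.arcsin_lt_pi_div_two.2 hb1
  have hsinu₀ : Real.sin u₀ = b := Real.sin_arcsin (by linarith) hb1.le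
  set c := (1/β - 1)/b with hcdef
  set E := Real.exp (-2*a*x) with hEdef
  set Z := Real.sqrt (2*a*x) with hZdef
  -- Step 1 : rewrite I0
  have hcos2 : ∀ u : ℝ, Real.exp (x * Real.cos (2*u)) =
      Real.exp x * Real.exp (-2*x * Real.sin u ^ 2) := by
    intro u
    rw [← Real.exp_add]
    congr 1
    have hc2 : Real.cos (2*u) = 1 - 2 * Real.sin u ^ 2 := by
      rw [Real.cos_two_mul]; nlinarith [Real.sin_sq_add_cos_sq u]
    rw [hc2]; ring
  have hdouble : (∫ θ in (0:ℝ)..π, Real.exp (x * Real.cos θ))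
      = 2 * ∫ u in (0:ℝ)..(π/2), Real.exp (x * Real.cos (2*u)) := by
    have h := intervalIntegral.smul_integral_comp_mul_left (a := (0:ℝ)) (b := π/2)
      (f := fun θ => Real.exp (x * Real.cos θ)) 2
    rw [mul_zero] at h
    have h2 : 2 * (π/2) = π := by ring
    rw [h2, smul_eq_mul] at h
    rw [← h]
  have hI0 : I0 x = Real.exp x *
      ((2/π) * ∫ u in (0:ℝ)..(π/2), Real.exp (-2*x * Real.sin u ^ 2)) := by
    unfold I0
    rw [hdouble]
    simp only [hcos2]
    rw [intervalIntegral.integral_const_mul]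
    ring
  -- continuity facts
  have hfc : Continuous fun u : ℝ => Real.exp (-2*x * Real.sin u ^ 2) := by continuity
  set g : ℝ → ℝ := fun t => (1 + c*t) * Real.exp (-2*x * t^2) with hgdef
  have hgcont : Continuous g := by rw [hgdef]; continuity
  have hgc2 : Continuous fun u : ℝ => Real.cos u * g (Real.sin u) := by continuity
  -- split the integral
  have hJsplit : (∫ u in (0:ℝ)..u₀, Real.exp (-2*x * Real.sin u ^ 2))
      + (∫ u in u₀..(π/2), Real.exp (-2*x * Real.sin u ^ 2))
      = ∫ u in (0:ℝ)..(π/2), Real.exp (-2*x * Real.sin u ^ 2) :=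
    intervalIntegral.integral_add_adjacent_intervals
      (hfc.intervalIntegrable _ _) (hfc.intervalIntegrable _ _)
  -- bound on [0, u₀]
  have hJ1 : (∫ u in (0:ℝ)..u₀, Real.exp (-2*x * Real.sin u ^ 2))
      ≤ ∫ t in (0:ℝ)..b, g t := by
    rw [← aux_sub b hb0.le hb1.le g hgcont]
    apply intervalIntegral.integral_mono_on hu00.le (hfc.intervalIntegrable _ _)
      (hgc2.intervalIntegrable _ _)
    intro u hu
    obtain ⟨hu0, huu₀⟩ := hu
    have ht0 : 0 ≤ Real.sin u := Real.sin_nonneg_of_nonneg_of_le_pi hu0 (by linarith)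
    have htb : Real.sin u ≤ b := by
      rw [← hsinu₀]
      exact Real.strictMonoOn_sin.monotoneOn ⟨by linarith, by linarith⟩
        ⟨by linarith, by linarith⟩ huu₀
    have hs0 : 0 ≤ Real.cos u := Real.cos_nonneg_of_mem_Icc ⟨by linarith, by linarith⟩
    have hs1 : Real.cos u ≤ 1 := Real.cos_le_one u
    have hst : Real.cos u ^ 2 = 1 - Real.sin u ^ 2 := by
      linarith [Real.sin_sq_add_cos_sq u]
    have key : 1 ≤ Real.cos u * (1 + c * Real.sin u) :=
      aux_core a (Real.sin u) (Real.cos u) ha ha1 ht0 htb hs0 hs1 hst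
    have hepos : (0:ℝ) < Real.exp (-2*x * Real.sin u ^ 2) := Real.exp_pos _
    have hle := mul_le_mul_of_nonneg_left key hepos.le
    calc Real.exp (-2*x * Real.sin u ^ 2)
        = Real.exp (-2*x * Real.sin u ^ 2) * 1 := by ring
      _ ≤ Real.exp (-2*x * Real.sin u ^ 2) * (Real.cos u * (1 + c * Real.sin u)) := hle
      _ = Real.cos u * g (Real.sin u) := by simp only [hgdef]; ring
  -- evaluate ∫ g
  have hsplitg : (∫ t in (0:ℝ)..b, g t)
      = (∫ t in (0:ℝ)..b, Real.exp (-2*x*t^2))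
        + c * ∫ t in (0:ℝ)..b, t * Real.exp (-2*x*t^2) := by
    rw [← intervalIntegral.integral_const_mul,
      ← intervalIntegral.integral_add
        ((by continuity : Continuous fun t : ℝ => Real.exp (-2*x*t^2)).intervalIntegrable _ _)
        ((by continuity : Continuous fun t : ℝ => c * (t * Real.exp (-2*x*t^2))).intervalIntegrable _ _)]
    congr 1
    funext t
    rw [hgdef]
    ring
  have hgauss : (∫ t in (0:ℝ)..b, Real.exp (-2*x*t^2))
      = Real.sqrt π / (2*Real.sqrt (2*x)) * erf Z := aux_gauss x a hx ha
  have hmom : (∫ t in (0:ℝ)..b, t * Real.exp (-2*x*t^2)) = (1 - E)/(4*x) := by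
    rw [aux_mom x b hx, hEdef]
    congr 3
    rw [hb2]; ring
  -- tail bound
  have hJ2 : (∫ u in u₀..(π/2), Real.exp (-2*x * Real.sin u ^ 2)) ≤ (π/2 - u₀) * E := by
    have h := intervalIntegral.integral_mono_on (μ := MeasureTheory.volume) hu0half.le (hfc.intervalIntegrable _ _)
      ((continuous_const : Continuous fun _ : ℝ => E).intervalIntegrable _ _) (fun u hu => by
        obtain ⟨hu1, hu2⟩ := hu
        have hsin : b ≤ Real.sin u := by
          rw [← hsinu₀]
          exact Real.strictMonoOn_sin.monotoneOn ⟨by linarith, by linarith⟩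
            ⟨by linarith, by linarith⟩ hu1
        have : a ≤ Real.sin u ^ 2 := by nlinarith
        rw [hEdef]
        exact Real.exp_le_exp.2 (by nlinarith))
    rwa [intervalIntegral.integral_const, smul_eq_mul] at h
  have hEpos : 0 < E := Real.exp_pos _
  set k := Real.sqrt (2*x) with hkdef
  have hk0 : 0 < k := Real.sqrt_pos.2 (by linarith)
  have hsqrtpi : (0:ℝ) < Real.sqrt π := Real.sqrt_pos.2 hπ
  have hβ0 : 0 < β := Real.sqrt_pos.2 (by linarith)
  set A : ℝ := Real.sqrt π / (2*k) * erf Z + c * ((1 - E)/(4*x)) with hAdef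
  have hsum : (∫ u in (0:ℝ)..(π/2), Real.exp (-2*x * Real.sin u ^ 2))
      < A + (π/2) * E := by
    rw [← hJsplit]
    have h1 : (∫ t in (0:ℝ)..b, g t) = A := by
      rw [hsplitg, hgauss, hmom, hAdef]
    have h2 : (π/2 - u₀) * E < (π/2) * E := by nlinarith
    have hJ1' := h1 ▸ hJ1
    calc (∫ u in (0:ℝ)..u₀, Real.exp (-2*x * Real.sin u ^ 2))
          + (∫ u in u₀..(π/2), Real.exp (-2*x * Real.sin u ^ 2))
        ≤ A + (π/2 - u₀) * E := add_le_add hJ1' hJ2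
      _ < A + (π/2) * E := (add_lt_add_iff_left A).2 h2
  rw [hI0]
  apply mul_lt_mul_of_pos_left _ (Real.exp_pos x)
  have hlt : (2/π) * (∫ u in (0:ℝ)..(π/2), Real.exp (-2*x * Real.sin u ^ 2))
      < (2/π) * (A + (π/2) * E) :=
    mul_lt_mul_of_pos_left hsum (by positivity)
  have hsqrt2pix : Real.sqrt (2*π*x) = Real.sqrt π * k := by
    rw [hkdef, ← Real.sqrt_mul hπ.le]
    congr 1; ring
  have halg : (2/π) * (A + (π/2) * E)
      = ((1/β - 1) / (2*b)) * (1 - E) / (π*x) + erf Z / Real.sqrt (2*π*x) + E := by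
    rw [hsqrt2pix, hAdef, hcdef]
    field_simp
    linear_combination (8 * erf Z * β * b * x) * Real.sq_sqrt hπ.le
  calc (2/π) * (∫ u in (0:ℝ)..(π/2), Real.exp (-2*x * Real.sin u ^ 2))
      < (2/π) * (A + (π/2) * E) := hlt
    _ = ((1/β - 1) / (2*b)) * (1 - E) / (π*x) + erf Z / Real.sqrt (2*π*x) + E := halg
    _ = ((1 / Real.sqrt (1 - a) - 1) / (2 * Real.sqrt a)) * (1 - Real.exp (-2 * a * x)) / (π * x)
        + erf (Real.sqrt (2 * a * x)) / Real.sqrt (2 * π * x) + Real.exp (-2 * a * x) := by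
      rw [hβdef, hbdef, hEdef, hZdef]
end

section
/- For every x > 0, the modified Bessel function of the first kind of order zero satisfies both I₀(x) < e^x/√(πx) + 1 and I₀(x) < e^x/√x. -/
open MeasureTheory Real Set

theorem cosbd (θ : ℝ) (h0 : 0 ≤ θ) (h1 : θ ≤ π/2) : Real.cos θ ≤ 1 - θ^2/3 := by
  rcases eq_or_lt_of_le h0 with h|h
  · simp [← h]
  have hu1 : θ/2 ≤ 1 := by nlinarith [Real.pi_lt_d2]
  have hs := Real.sin_gt_sub_cube (by linarith : 0 < θ/2)
  have hcos : Real.cos θ = 1 - 2 * Real.sin (θ/2) ^ 2 := by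
    have h2 : (2:ℝ) * (θ/2) = θ := by ring
    have := Real.cos_two_mul (θ/2)
    rw [h2] at this
    nlinarith [Real.sin_sq_add_cos_sq (θ/2)]
  have hpi : θ/2 ≤ π/4 := by linarith
  have hpi2 : π^2 < 10 := by nlinarith [Real.pi_lt_d2, Real.pi_pos]
  have h3 : (θ/2)^2 ≤ (π/4)^2 := by nlinarith
  have hlb : Real.sin (θ/2) ≥ θ/2 * (1 - π^2/64) := by nlinarith
  have hnn : (0:ℝ) ≤ θ/2 * (1 - π^2/64) := by nlinarith
  have hsq : Real.sin (θ/2)^2 ≥ (θ/2 * (1 - π^2/64))^2 :=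
    mul_self_le_mul_self hnn hlb |>.trans_eq (by ring) |>.trans_eq' (by ring)
  have hc : (1 - π^2/64)^2 ≥ 2/3 := by nlinarith [sq_nonneg π]
  have hfin : (θ/2 * (1 - π^2/64))^2 ≥ (θ/2)^2 * (2/3) := by
    have := mul_le_mul_of_nonneg_left hc (sq_nonneg (θ/2))
    nlinarith [this]
  nlinarith

theorem I0bd (x : ℝ) (hx : 0 < x) :
    I0 x ≤ Real.exp x / Real.sqrt x * (Real.sqrt 3 / (2 * Real.sqrt π)) + 1/2 := by
  have hπ := Real.pi_pos
  have hcont : ∀ a b : ℝ, IntervalIntegrable (fun θ => Real.exp (x * Real.cos θ)) volume a b :=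
    fun a b => (Real.continuous_exp.comp (continuous_const.mul Real.continuous_cos)).intervalIntegrable a b
  have hsplit : (∫ θ in (0:ℝ)..π, Real.exp (x * Real.cos θ))
      = (∫ θ in (0:ℝ)..(π/2), Real.exp (x * Real.cos θ))
      + ∫ θ in (π/2)..π, Real.exp (x * Real.cos θ) :=
    (intervalIntegral.integral_add_adjacent_intervals (hcont _ _) (hcont _ _)).symm
  -- bound on second piece
  have hB : (∫ θ in (π/2)..π, Real.exp (x * Real.cos θ)) ≤ π/2 := by
    have : (∫ θ in (π/2)..π, Real.exp (x * Real.cos θ)) ≤ ∫ θ in (π/2)..π, (1:ℝ) := by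
      apply intervalIntegral.integral_mono_on (by linarith) (hcont _ _)
        (intervalIntegrable_const)
      intro θ hθ
      rw [Real.exp_le_one_iff]
      exact mul_nonpos_of_nonneg_of_nonpos hx.le
        (Real.cos_nonpos_of_pi_div_two_le_of_le hθ.1 (by linarith [hθ.2]))
    simpa using this.trans_eq (by simp; ring)
  -- bound on first piece
  have hA : (∫ θ in (0:ℝ)..(π/2), Real.exp (x * Real.cos θ))
      ≤ Real.exp x * (Real.sqrt (π / (x/3)) / 2) := by
    have step1 : (∫ θ in (0:ℝ)..(π/2), Real.exp (x * Real.cos θ))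
        ≤ ∫ θ in (0:ℝ)..(π/2), Real.exp x * Real.exp (-(x/3) * θ^2) := by
      apply intervalIntegral.integral_mono_on (by linarith) (hcont _ _)
      · exact (continuous_const.mul (Real.continuous_exp.comp
          (continuous_const.mul (continuous_pow 2)))).intervalIntegrable _ _
      intro θ hθ
      rw [← Real.exp_add]
      apply Real.exp_le_exp.2
      have := cosbd θ hθ.1 hθ.2
      nlinarith [this, hx.le, sq_nonneg θ]
    have step2 : (∫ θ in (0:ℝ)..(π/2), Real.exp x * Real.exp (-(x/3) * θ^2))
        ≤ Real.exp x * (Real.sqrt (π / (x/3)) / 2) := by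
      rw [intervalIntegral.integral_const_mul]
      apply mul_le_mul_of_nonneg_left _ (Real.exp_nonneg x)
      rw [← integral_gaussian_Ioi (x/3)]
      rw [intervalIntegral.integral_of_le (by linarith : (0:ℝ) ≤ π/2)]
      apply setIntegral_mono_set (integrable_exp_neg_mul_sq (by linarith : 0 < x/3)).integrableOn
        (Filter.Eventually.of_forall fun θ => Real.exp_nonneg _)
        (HasSubset.Subset.eventuallyLE Ioc_subset_Ioi_self)
    exact step1.trans step2
  -- combine
  have hsq : Real.sqrt (π / (x/3)) = Real.sqrt 3 * Real.sqrt π / Real.sqrt x := by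
    rw [show π / (x/3) = 3 * π / x by ring, Real.sqrt_div' _ (by positivity),
      Real.sqrt_mul (by norm_num)]
  have hπs : (0:ℝ) < Real.sqrt π := Real.sqrt_pos.2 hπ
  have hxs : (0:ℝ) < Real.sqrt x := Real.sqrt_pos.2 hx
  rw [I0, hsplit]
  have := add_le_add hA hB
  calc (1/π) * ((∫ θ in (0:ℝ)..(π/2), Real.exp (x * Real.cos θ))
      + ∫ θ in (π/2)..π, Real.exp (x * Real.cos θ))
      ≤ (1/π) * (Real.exp x * (Real.sqrt (π / (x/3)) / 2) + π/2) := by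
        apply mul_le_mul_of_nonneg_left this (by positivity)
    _ = Real.exp x / Real.sqrt x * (Real.sqrt 3 / (2 * Real.sqrt π)) + 1/2 := by
        rw [hsq]; field_simp; ring_nf
        rw [Real.sq_sqrt hπ.le]; ring

theorem stmt_11 (x : ℝ) (hx : 0 < x) :
    I0 x < Real.exp x / Real.sqrt (π * x) + 1 ∧ I0 x < Real.exp x / Real.sqrt x := by
  have hπ := Real.pi_pos
  have hπs : (0:ℝ) < Real.sqrt π := Real.sqrt_pos.2 hπ
  have hxs : (0:ℝ) < Real.sqrt x := Real.sqrt_pos.2 hx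
  have hbd := I0bd x hx
  set t : ℝ := Real.exp x / Real.sqrt x with ht
  have ht2 : 2 < t := by
    have h1 : 1 + x < Real.exp x := Real.add_one_lt_exp hx.ne' |>.trans_eq' (by ring)
    have h2 : 2 * Real.sqrt x ≤ 1 + x := by
      nlinarith [sq_nonneg (Real.sqrt x - 1), Real.sq_sqrt hx.le]
    rw [ht, lt_div_iff₀ hxs]
    linarith
  have ht0 : 0 < t := by linarith
  have h3 : Real.sqrt 3 < 2 := by
    nlinarith [Real.sq_sqrt (show (0:ℝ) ≤ 3 by norm_num), Real.sqrt_nonneg 3]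
  have hc : Real.sqrt 3 / (2 * Real.sqrt π) < 7/10 := by
    rw [div_lt_iff₀ (by positivity)]
    nlinarith [Real.sq_sqrt (show (0:ℝ) ≤ 3 by norm_num), Real.sq_sqrt hπ.le,
      Real.sqrt_nonneg 3, Real.sqrt_nonneg π, Real.pi_gt_three]
  have hc0 : 0 < Real.sqrt 3 / (2 * Real.sqrt π) := by positivity
  constructor
  · have hπx : Real.exp x / Real.sqrt (π * x) = t / Real.sqrt π := by
      rw [Real.sqrt_mul hπ.le, ht]
      field_simp
    rw [hπx]
    have hcc : Real.sqrt 3 / (2 * Real.sqrt π) < 1 / Real.sqrt π := by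
      rw [div_lt_div_iff₀ (by positivity) hπs]
      nlinarith
    have : t * (Real.sqrt 3 / (2 * Real.sqrt π)) < t / Real.sqrt π := by
      calc t * (Real.sqrt 3 / (2 * Real.sqrt π)) < t * (1 / Real.sqrt π) :=
            mul_lt_mul_of_pos_left hcc ht0
        _ = t / Real.sqrt π := mul_one_div t _
    calc I0 x ≤ t * (Real.sqrt 3 / (2 * Real.sqrt π)) + 1/2 := hbd
      _ < t / Real.sqrt π + 1 := by linarith
  · have : t * (Real.sqrt 3 / (2 * Real.sqrt π)) < t * (7/10) :=
      mul_lt_mul_of_pos_left hc ht0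
    calc I0 x ≤ t * (Real.sqrt 3 / (2 * Real.sqrt π)) + 1/2 := hbd
      _ < t := by nlinarith
end

section
/- For a ∈ (0,1), x > 0, and â = (1/√(1−a) − 1)/(2√a), the inequality 1/√(1 − u²/(4x)) ≤ â·u/√x + 1 holds for every u with 0 ≤ u ≤ 2√(ax). -/
open Real

lemma key (s t k : ℝ) (hs : 0 < s) (ht0 : 0 ≤ t) (hts : t ≤ s)
    (hk : 0 < k) (hk1 : k ≤ 1) (hks : 1 - s ≤ k) (hk2 : k^2 = 1 - s^2) :
    1 ≤ (1 - t^2) * (1 + ((1/k - 1)/s) * t)^2 := by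
  set c := (1/k - 1)/s with hc
  have hd : 1 + c * s = 1/k := by rw [hc, div_mul_cancel₀ _ hs.ne']; ring
  have hc0 : 0 ≤ c := by
    apply div_nonneg _ hs.le
    have : (1:ℝ) ≤ 1/k := by rw [le_div_iff₀ hk]; linarith
    linarith
  have hrel : (1 + c*s)^2 * (1 - s^2) = 1 := by
    rw [hd, ← hk2]; field_simp
  have hcd : c ≤ 1 + c * s := by
    rw [hd, hc, div_le_div_iff₀ hs hk]
    have h1 : (1/k - 1) * k = 1 - k := by field_simp
    rw [h1]; linarith
  have hQ0 : 0 ≤ c^2*t^2 + (2*c + c^2*s)*t + ((1 + c*s)^2 - c^2) := by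
    have h1 : 0 ≤ (1 + c*s)^2 - c^2 := by nlinarith
    have h2 : 0 ≤ (2*c + c^2*s)*t := by positivity
    positivity
  have keq : s * ((1 - t^2) * (1 + c*t)^2) =
      s * (1 + t*(s-t)*(c^2*t^2 + (2*c + c^2*s)*t + ((1 + c*s)^2 - c^2))) := by
    linear_combination t * hrel
  have keq2 : (1 - t^2) * (1 + c*t)^2 =
      1 + t*(s-t)*(c^2*t^2 + (2*c + c^2*s)*t + ((1 + c*s)^2 - c^2)) :=
    mul_left_cancel₀ hs.ne' keq
  rw [keq2]
  nlinarith [mul_nonneg (mul_nonneg ht0 (sub_nonneg.2 hts)) hQ0]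

theorem stmt_12 (a x : ℝ) (ha : 0 < a) (ha1 : a < 1) (hx : 0 < x) :
    ∀ u : ℝ, 0 ≤ u → u ≤ 2 * Real.sqrt (a * x) →
      1 / Real.sqrt (1 - u ^ 2 / (4 * x))
        ≤ ((1 / Real.sqrt (1 - a) - 1) / (2 * Real.sqrt a)) * u / Real.sqrt x + 1 := by
  intro u hu0 hu
  set s := Real.sqrt a with hsd
  set k := Real.sqrt (1 - a) with hkd
  set w := Real.sqrt x with hwd
  have hs : 0 < s := Real.sqrt_pos.2 ha
  have hs2 : s^2 = a := Real.sq_sqrt ha.le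
  have hs1 : s < 1 := by nlinarith [Real.sqrt_nonneg a]
  have hk : 0 < k := Real.sqrt_pos.2 (by linarith)
  have hk2 : k^2 = 1 - s^2 := by rw [hs2]; exact Real.sq_sqrt (by linarith)
  have hk1 : k ≤ 1 := by nlinarith
  have hks : 1 - s ≤ k := by nlinarith
  have hw : 0 < w := Real.sqrt_pos.2 hx
  have hw2 : w^2 = x := Real.sq_sqrt hx.le
  set t := u / (2*w) with htd
  have ht0 : 0 ≤ t := by positivity
  have hts : t ≤ s := by
    rw [htd, div_le_iff₀ (by positivity)]
    rw [Real.sqrt_mul ha.le, ← hsd, ← hwd] at hu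
    linarith
  have hut : u^2 / (4*x) = t^2 := by
    rw [htd]; rw [div_pow]; rw [mul_pow]; rw [hw2]; ring_nf
  have h1t : 0 < 1 - t^2 := by nlinarith
  have hkey := key s t k hs ht0 hts hk hk1 hks hk2
  set c := (1/k - 1)/s with hc
  have hc0 : 0 ≤ c := by
    apply div_nonneg _ hs.le
    have : (1:ℝ) ≤ 1/k := by rw [le_div_iff₀ hk]; linarith
    linarith
  have hsq : 0 < Real.sqrt (1 - t^2) := Real.sqrt_pos.2 h1t
  have hprod : 1 ≤ Real.sqrt (1 - t^2) * (1 + c*t) := by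
    have h2 : 1 ≤ (Real.sqrt (1 - t^2) * (1 + c*t))^2 := by
      rw [mul_pow, Real.sq_sqrt h1t.le]; exact hkey
    nlinarith [mul_nonneg hsq.le (by positivity : (0:ℝ) ≤ 1 + c*t)]
  have hL : 1 / Real.sqrt (1 - t^2) ≤ 1 + c*t := by
    rw [div_le_iff₀ hsq]; linarith [hprod]
  have hR : ((1/k - 1)/(2*s)) * u / w + 1 = 1 + c*t := by
    rw [hc, htd]; field_simp; ring
  rw [hut, hR]
  exact hL
end

section
/- For all r > 0 and R > 0, the kernel satisfies K(R,r) < √(R/r)·e^{-(R−r)²/2}, i.e., R·e^{-(R²+r²)/2}·I₀(rR) < √(R/r)·e^{-(R−r)²/2}. -/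
open MeasureTheory Real Set

lemma I0_lt (x : ℝ) (hx : 0 < x) : I0 x < Real.exp x / Real.sqrt x := by
  have hπ := Real.pi_pos
  set c : ℝ := 2 * x / π ^ 2 with hc
  have hcpos : 0 < c := by positivity
  -- pointwise bound
  have step1 : (∫ θ in (0:ℝ)..π, Real.exp (x * Real.cos θ)) ≤
      ∫ θ in (0:ℝ)..π, Real.exp x * Real.exp (-c * θ ^ 2) := by
    apply intervalIntegral.integral_mono_on hπ.le
    · exact (Continuous.intervalIntegrable (by continuity) _ _)
    · exact (Continuous.intervalIntegrable (by continuity) _ _)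
    · intro θ hθ
      rw [← Real.exp_add]
      apply Real.exp_le_exp.2
      have hcos : Real.cos θ ≤ 1 - 2 / π ^ 2 * θ ^ 2 := by
        apply Real.cos_le_one_sub_mul_cos_sq
        rw [abs_le]; exact ⟨by linarith [hθ.1], hθ.2⟩
      have := mul_le_mul_of_nonneg_left hcos hx.le
      rw [hc]; ring_nf; ring_nf at this; linarith
  -- compare with gaussian on Ioi 0
  have hInt : IntegrableOn (fun θ : ℝ => Real.exp (-c * θ ^ 2)) (Ioi 0) := by
    exact (integrable_exp_neg_mul_sq hcpos).integrableOn
  have step2 : (∫ θ in (0:ℝ)..π, Real.exp (-c * θ ^ 2)) <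
      ∫ θ in Ioi (0:ℝ), Real.exp (-c * θ ^ 2) := by
    rw [intervalIntegral.integral_of_le hπ.le]
    have hsplit : (∫ θ in Ioi (0:ℝ), Real.exp (-c * θ ^ 2)) =
        (∫ θ in Ioc (0:ℝ) π, Real.exp (-c * θ ^ 2)) +
        ∫ θ in Ioi π, Real.exp (-c * θ ^ 2) := by
      rw [← setIntegral_union]
      · rw [Ioc_union_Ioi_eq_Ioi hπ.le]
      · exact Ioc_disjoint_Ioi le_rfl
      · exact measurableSet_Ioi
      · exact hInt.mono_set (Ioc_subset_Ioi_self.trans (Ioi_subset_Ioi le_rfl))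
      · exact hInt.mono_set (Ioi_subset_Ioi hπ.le)
    have hpos : 0 < ∫ θ in Ioi π, Real.exp (-c * θ ^ 2) := by
      apply setIntegral_pos_iff_support_of_nonneg_ae ?_ ?_ |>.2
      · have hsupp : (Function.support fun θ : ℝ => Real.exp (-c * θ ^ 2)) = univ := by
          ext θ; simp [Real.exp_ne_zero]
        rw [hsupp, univ_inter]
        simpa using measure_Ioi_pos (volume : Measure ℝ) π
      · exact Filter.Eventually.of_forall fun θ => (Real.exp_pos _).le
      · exact hInt.mono_set (Ioi_subset_Ioi hπ.le)
    linarith [hsplit]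
  have hgauss : (∫ θ in Ioi (0:ℝ), Real.exp (-c * θ ^ 2)) = Real.sqrt (π / c) / 2 :=
    integral_gaussian_Ioi c
  -- assemble
  have h1 : I0 x < (1 / π) * (Real.exp x * (Real.sqrt (π / c) / 2)) := by
    rw [I0]
    apply mul_lt_mul_of_pos_left _ (by positivity)
    calc (∫ θ in (0:ℝ)..π, Real.exp (x * Real.cos θ))
        ≤ ∫ θ in (0:ℝ)..π, Real.exp x * Real.exp (-c * θ ^ 2) := step1
      _ = Real.exp x * ∫ θ in (0:ℝ)..π, Real.exp (-c * θ ^ 2) := by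
          rw [← intervalIntegral.integral_const_mul]
      _ < Real.exp x * (Real.sqrt (π / c) / 2) := by
          exact mul_lt_mul_of_pos_left (hgauss ▸ step2) (Real.exp_pos x)
  refine h1.trans_le ?_
  -- (1/π) * (e^x * (√(π/c)/2)) ≤ e^x / √x
  have hval : Real.sqrt (π / c) = π * Real.sqrt (π / (2 * x)) := by
    rw [hc]
    rw [show π / (2 * x / π ^ 2) = π ^ 2 * (π / (2 * x)) by field_simp]
    rw [Real.sqrt_mul (by positivity), Real.sqrt_sq hπ.le]
  rw [hval]
  rw [div_eq_mul_inv (Real.exp x)]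
  have hsx : 0 < Real.sqrt x := Real.sqrt_pos.2 hx
  have h2 : Real.sqrt (π / (2 * x)) = Real.sqrt (π / 2) / Real.sqrt x := by
    rw [show π / (2 * x) = (π / 2) / x by ring, Real.sqrt_div (by positivity)]
  have h3 : Real.sqrt (π / 2) ≤ 2 := by
    have h4 : Real.sqrt (π / 2) ≤ Real.sqrt 4 :=
      Real.sqrt_le_sqrt (by linarith [Real.pi_le_four])
    rwa [show (4:ℝ) = 2 ^ 2 by norm_num, Real.sqrt_sq (by norm_num)] at h4
  have key : (1 / π) * (π * Real.sqrt (π / (2 * x)) / 2) ≤ (Real.sqrt x)⁻¹ := by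
    rw [h2, show (1 / π) * (π * (Real.sqrt (π / 2) / Real.sqrt x) / 2)
        = Real.sqrt (π / 2) / (2 * Real.sqrt x) by field_simp,
      inv_eq_one_div, div_le_div_iff₀ (by positivity) hsx]
    nlinarith [Real.sqrt_nonneg (π / 2)]
  calc (1/π) * (Real.exp x * (π * Real.sqrt (π / (2*x)) / 2))
      = Real.exp x * ((1/π) * (π * Real.sqrt (π / (2*x)) / 2)) := by ring
    _ ≤ Real.exp x * (Real.sqrt x)⁻¹ :=
        mul_le_mul_of_nonneg_left key (Real.exp_pos x).le

theorem stmt_14 (R r : ℝ) (hR : 0 < R) (hr : 0 < r) :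
    Ker R r < Real.sqrt (R / r) * Real.exp (-(R - r) ^ 2 / 2) := by
  have hx : 0 < r * R := mul_pos hr hR
  have h := I0_lt (r * R) hx
  have h1 : Ker R r < R * Real.exp (-(R ^ 2 + r ^ 2) / 2) *
      (Real.exp (r * R) / Real.sqrt (r * R)) := by
    unfold Ker
    exact mul_lt_mul_of_pos_left h (by positivity)
  refine h1.trans_le (le_of_eq ?_)
  have hexp : Real.exp (-(R ^ 2 + r ^ 2) / 2) * Real.exp (r * R)
      = Real.exp (-(R - r) ^ 2 / 2) := by
    rw [← Real.exp_add]; ring_nf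
  have hRs : Real.sqrt R * Real.sqrt R = R := Real.mul_self_sqrt hR.le
  have hdiv : R / Real.sqrt (r * R) = Real.sqrt (R / r) := by
    rw [Real.sqrt_mul hr.le, Real.sqrt_div hR.le,
      div_eq_div_iff (by positivity : (0:ℝ) < Real.sqrt r * Real.sqrt R).ne' (Real.sqrt_pos.2 hr).ne']
    nlinarith [hRs, Real.sqrt_nonneg r]
  calc R * Real.exp (-(R ^ 2 + r ^ 2) / 2) * (Real.exp (r * R) / Real.sqrt (r * R))
      = (R / Real.sqrt (r * R)) * (Real.exp (-(R ^ 2 + r ^ 2) / 2) * Real.exp (r * R)) := by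
        ring
    _ = Real.sqrt (R / r) * Real.exp (-(R - r) ^ 2 / 2) := by rw [hexp, hdiv]
end

section
/- For every s ≥ 0 and every R ≥ 0, ∫₀^∞ r·e^{-s·r²}·K(R,r) dr = (R/(1+2s))·e^{-s·R²/(1+2s)}. -/
open MeasureTheory Real Set

lemma integrable_exp_quad {a : ℝ} (ha : 0 < a) (b : ℝ) :
    Integrable (fun x : ℝ => Real.exp (-a * x ^ 2 + b * x)) := by
  have h := (integrable_cexp_quadratic (b := (a : ℂ)) (by simpa using ha) b 0).norm
  refine h.congr (Filter.Eventually.of_forall fun x => ?_)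
  show ‖Complex.exp _‖ = _
  rw [show (-(a:ℂ) * (x:ℂ) ^ 2 + (b:ℂ) * (x:ℂ) + 0) = ((-a * x ^ 2 + b * x : ℝ) : ℂ) by
    push_cast; ring, Complex.norm_exp_ofReal]

lemma integral_exp_quad {a : ℝ} (ha : 0 < a) (b : ℝ) :
    ∫ x : ℝ, Real.exp (-a * x ^ 2 + b * x)
      = Real.sqrt (π / a) * Real.exp (b ^ 2 / (4 * a)) := by
  have h : ∀ x : ℝ, -a * x ^ 2 + b * x = -a * (x + -(b / (2 * a))) ^ 2 + b ^ 2 / (4 * a) := by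
    intro x; field_simp; ring
  simp_rw [h, Real.exp_add, integral_mul_const]
  rw [integral_add_right_eq_self (fun x : ℝ => Real.exp (-a * x ^ 2)) (-(b / (2 * a))),
    integral_gaussian]

lemma ioo_exp_cos (x : ℝ) :
    ∫ θ in Ioo (-π) π, Real.exp (x * Real.cos θ) = 2 * π * I0 x := by
  have hcont : Continuous fun θ : ℝ => Real.exp (x * Real.cos θ) :=
    Real.continuous_exp.comp (continuous_const.mul Real.continuous_cos)
  have hc : ∀ y z : ℝ, IntervalIntegrable (fun θ => Real.exp (x * Real.cos θ)) volume y z :=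
    fun y z => hcont.intervalIntegrable y z
  have h1 : (∫ θ in (-π)..(0:ℝ), Real.exp (x * Real.cos θ))
      = ∫ θ in (0:ℝ)..π, Real.exp (x * Real.cos θ) := by
    have := intervalIntegral.integral_comp_neg (a := (0:ℝ)) (b := π)
      (fun θ => Real.exp (x * Real.cos θ))
    simp only [Real.cos_neg, neg_zero] at this
    linarith
  calc ∫ θ in Ioo (-π) π, Real.exp (x * Real.cos θ)
      = ∫ θ in Ioc (-π) π, Real.exp (x * Real.cos θ) :=
        (integral_Ioc_eq_integral_Ioo).symm
    _ = ∫ θ in (-π)..π, Real.exp (x * Real.cos θ) :=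
        (intervalIntegral.integral_of_le (by linarith [Real.pi_pos])).symm
    _ = (∫ θ in (-π)..(0:ℝ), Real.exp (x * Real.cos θ))
          + ∫ θ in (0:ℝ)..π, Real.exp (x * Real.cos θ) :=
        (intervalIntegral.integral_add_adjacent_intervals (hc _ _) (hc _ _)).symm
    _ = 2 * π * I0 x := by
        rw [h1, I0]; field_simp; ring


theorem stmt_15 (s R : ℝ) (hs : 0 ≤ s) (hR : 0 ≤ R) :
    (∫ r in Ioi (0:ℝ), r * Real.exp (-s * r ^ 2) * Ker R r)
      = (R / (1 + 2 * s)) * Real.exp (-s * R ^ 2 / (1 + 2 * s)) := by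
  have ha : (0:ℝ) < s + 1/2 := by linarith
  set G : ℝ × ℝ → ℝ :=
    fun p => Real.exp (-(s + 1/2) * p.1 ^ 2 + R * p.1) * Real.exp (-(s + 1/2) * p.2 ^ 2)
    with hG
  set F : ℝ × ℝ → ℝ :=
    fun p => p.1 * Real.exp (-(s + 1/2) * p.1 ^ 2 + R * (p.1 * Real.cos p.2)) with hF
  -- 2D Gaussian integral
  have hGint : ∫ p : ℝ × ℝ, G p = π / (s + 1/2) * Real.exp (R ^ 2 / (4 * (s + 1/2))) := by
    simp only [hG]
    rw [Measure.volume_eq_prod,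
      integral_prod_mul (f := fun x : ℝ => Real.exp (-(s + 1/2) * x ^ 2 + R * x))
        (g := fun y : ℝ => Real.exp (-(s + 1/2) * y ^ 2)),
      integral_exp_quad ha R, integral_gaussian]
    rw [show √(π / (s + 1/2)) * Real.exp (R ^ 2 / (4 * (s + 1/2))) * √(π / (s + 1/2))
        = (√(π / (s + 1/2)) * √(π / (s + 1/2))) * Real.exp (R ^ 2 / (4 * (s + 1/2))) by ring,
      Real.mul_self_sqrt (by positivity)]
  -- key pointwise identity for polar coordinates
  have key : ∀ p : ℝ × ℝ, p.1 • G (polarCoord.symm p) = F p := by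
    intro p
    have ht : Real.sin p.2 ^ 2 + Real.cos p.2 ^ 2 = 1 := Real.sin_sq_add_cos_sq p.2
    simp only [hG, hF, polarCoord_symm_apply, smul_eq_mul, ← Real.exp_add]
    congr 1
    rw [Real.exp_eq_exp]
    linear_combination (-(s + 1/2) * p.1 ^ 2) * ht
  -- integrability of F on the polar target
  have hFint : IntegrableOn F (Ioi (0:ℝ) ×ˢ Ioo (-π) π) (volume.prod volume) := by
    have hg : Integrable
        (fun p : ℝ × ℝ => Real.exp (-(s + 1/2) * p.1 ^ 2 + (R + 1) * p.1) * (1:ℝ))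
        ((volume.restrict (Ioi 0)).prod (volume.restrict (Ioo (-π) π))) :=
      ((integrable_exp_quad ha (R + 1)).restrict).mul_prod
        (integrableOn_const (C := (1:ℝ)) measure_Ioo_lt_top.ne)
    rw [Measure.prod_restrict] at hg
    refine hg.mono' ?_ ?_
    · exact (Continuous.aestronglyMeasurable (by
        exact continuous_fst.mul (Real.continuous_exp.comp (by fun_prop))))
    · filter_upwards [ae_restrict_mem (measurableSet_Ioi.prod measurableSet_Ioo)] with p hp
      obtain ⟨hp1, _⟩ := hp
      have hp1' : (0:ℝ) < p.1 := hp1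
      have h1 : R * (p.1 * Real.cos p.2) ≤ R * p.1 := by
        nlinarith [mul_nonneg (mul_nonneg hR hp1'.le) (sub_nonneg.mpr (Real.cos_le_one p.2))]
      have h2 : p.1 ≤ Real.exp p.1 := by linarith [Real.add_one_le_exp p.1]
      rw [hF, Real.norm_eq_abs, abs_of_nonneg (by positivity)]
      calc p.1 * Real.exp (-(s + 1/2) * p.1 ^ 2 + R * (p.1 * Real.cos p.2))
          ≤ Real.exp p.1 * Real.exp (-(s + 1/2) * p.1 ^ 2 + R * p.1) := by
            exact mul_le_mul h2 (Real.exp_le_exp.mpr (by linarith)) (Real.exp_nonneg _)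
              (Real.exp_nonneg _)
        _ = Real.exp (-(s + 1/2) * p.1 ^ 2 + (R + 1) * p.1) * 1 := by
            rw [← Real.exp_add, mul_one]; congr 1; ring
  -- inner integral over θ
  have hinner : ∀ r : ℝ, (∫ θ in Ioo (-π) π, F (r, θ))
      = r * Real.exp (-(s + 1/2) * r ^ 2) * (2 * π * I0 (r * R)) := by
    intro r
    have hpt : ∀ θ : ℝ, F (r, θ)
        = (r * Real.exp (-(s + 1/2) * r ^ 2)) * Real.exp ((r * R) * Real.cos θ) := by
      intro θ
      simp only [hF]
      rw [mul_assoc, ← Real.exp_add]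
      congr 2
      ring
    simp_rw [hpt]
    rw [integral_const_mul, ioo_exp_cos]
  -- main iterated integral computation
  have hiter : ∫ r in Ioi (0:ℝ), r * Real.exp (-(s + 1/2) * r ^ 2) * (2 * π * I0 (r * R))
      = π / (s + 1/2) * Real.exp (R ^ 2 / (4 * (s + 1/2))) := by
    calc ∫ r in Ioi (0:ℝ), r * Real.exp (-(s + 1/2) * r ^ 2) * (2 * π * I0 (r * R))
        = ∫ r in Ioi (0:ℝ), ∫ θ in Ioo (-π) π, F (r, θ) := by
          refine setIntegral_congr_fun measurableSet_Ioi fun r _ => ?_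
          rw [hinner]
      _ = ∫ z in Ioi (0:ℝ) ×ˢ Ioo (-π) π, F z ∂(volume.prod volume) :=
          (setIntegral_prod F hFint).symm
      _ = ∫ z in polarCoord.target, z.1 • G (polarCoord.symm z) := by
          rw [polarCoord_target, ← Measure.volume_eq_prod]
          exact (setIntegral_congr_fun (measurableSet_Ioi.prod measurableSet_Ioo)
            fun p _ => (key p).symm)
      _ = ∫ z, G z := integral_comp_polarCoord_symm G
      _ = π / (s + 1/2) * Real.exp (R ^ 2 / (4 * (s + 1/2))) := hGint
  -- extract the 2π constant
  set X : ℝ := ∫ r in Ioi (0:ℝ), r * Real.exp (-(s + 1/2) * r ^ 2) * I0 (r * R) with hX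
  have hiter2 : X = Real.exp (R ^ 2 / (4 * (s + 1/2))) / (2 * (s + 1/2)) := by
    have h2 : ∫ r in Ioi (0:ℝ), (2 * π) * (r * Real.exp (-(s + 1/2) * r ^ 2) * I0 (r * R))
        = π / (s + 1/2) * Real.exp (R ^ 2 / (4 * (s + 1/2))) := by
      rw [← hiter]
      exact setIntegral_congr_fun measurableSet_Ioi fun r _ => by ring
    rw [integral_const_mul, ← hX] at h2
    have ha2 : ((2:ℝ) * (s + 1/2)) ≠ 0 := by positivity
    rw [eq_div_iff ha2]
    have h4 : (2:ℝ) * X = Real.exp (R ^ 2 / (4 * (s + 1/2))) / (s + 1/2) := by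
      apply mul_left_cancel₀ Real.pi_ne_zero
      linear_combination h2
    rw [eq_div_iff (ne_of_gt ha)] at h4
    linear_combination h4
  -- final assembly
  have hpt : ∀ r : ℝ, r * Real.exp (-s * r ^ 2) * Ker R r
      = (R * Real.exp (-(R ^ 2) / 2)) * (r * Real.exp (-(s + 1/2) * r ^ 2) * I0 (r * R)) := by
    intro r
    have hexp : Real.exp (-s * r ^ 2) * Real.exp (-(R ^ 2 + r ^ 2) / 2)
        = Real.exp (-(R ^ 2) / 2) * Real.exp (-(s + 1/2) * r ^ 2) := by
      rw [← Real.exp_add, ← Real.exp_add]; congr 1; ring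
    rw [Ker]
    linear_combination (r * R * I0 (r * R)) * hexp
  rw [show (fun r : ℝ => r * Real.exp (-s * r ^ 2) * Ker R r)
      = fun r : ℝ => (R * Real.exp (-(R ^ 2) / 2))
          * (r * Real.exp (-(s + 1/2) * r ^ 2) * I0 (r * R)) from funext hpt]
  rw [integral_const_mul, ← hX, hiter2]
  have hE : Real.exp (-(R ^ 2) / 2) * Real.exp (R ^ 2 / (4 * (s + 1/2)))
      = Real.exp (-s * R ^ 2 / (1 + 2 * s)) := by
    rw [← Real.exp_add]; congr 1
    have h1 : (1 + 2 * s) ≠ 0 := by positivity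
    field_simp
    ring
  rw [show ((2:ℝ) * (s + 1/2)) = 1 + 2 * s from by ring]
  linear_combination (R / (1 + 2 * s)) * hE
end

section
/- Let n be a complex random variable with density w ↦ (1/(2π))·e^{-|w|²/2} with respect to Lebesgue measure on ℂ (a circularly symmetric complex Gaussian with E|n|² = 2), let x be any complex random variable independent of n, and let y = x + n. Then y has a density f_y on ℂ, and for every A > 1/2 there do NOT exist constants C > 0 and M > 0 such that f_y(y) ≤ C·e^{-A|y|²} for all y with |y| ≥ M; that is, f_y(y) is not O(e^{-A|y|²}) as |y| → ∞ for any A > 1/2. -/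
set_option maxHeartbeats 1000000

open MeasureTheory Real ProbabilityTheory
open scoped ENNReal

lemma gauss_lintegral_complex {δ : ℝ} (hδ : 0 < δ) :
    ∫⁻ y : ℂ, ENNReal.ofReal (Real.exp (-δ * ‖y‖ ^ 2))
      = ENNReal.ofReal (∫ t : ℝ, Real.exp (-δ * t ^ 2))
        * ENNReal.ofReal (∫ t : ℝ, Real.exp (-δ * t ^ 2)) := by
  have key : ∫⁻ y : ℂ, ENNReal.ofReal (Real.exp (-δ * ‖y‖ ^ 2))
      = ∫⁻ p : ℝ × ℝ, ENNReal.ofReal (Real.exp (-δ * p.1 ^ 2))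
          * ENNReal.ofReal (Real.exp (-δ * p.2 ^ 2)) := by
    rw [← Complex.volume_preserving_equiv_real_prod.lintegral_comp (by fun_prop)]
    congr 1; ext w
    rw [← ENNReal.ofReal_mul (Real.exp_nonneg _), ← Real.exp_add]
    · congr 2
      have : ‖w‖ ^ 2 = w.re ^ 2 + w.im ^ 2 := by
        rw [Complex.sq_norm, Complex.normSq_apply]; ring
      simp [Complex.measurableEquivRealProd, this]
      ring
  rw [key, MeasureTheory.Measure.volume_eq_prod,
    lintegral_prod_mul (f := fun t : ℝ => ENNReal.ofReal (Real.exp (-δ * t ^ 2)))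
      (g := fun t : ℝ => ENNReal.ofReal (Real.exp (-δ * t ^ 2))) (by fun_prop) (by fun_prop)]
  have h1 : ∫⁻ t : ℝ, ENNReal.ofReal (Real.exp (-δ * t ^ 2))
      = ENNReal.ofReal (∫ t : ℝ, Real.exp (-δ * t ^ 2)) := by
    rw [← ofReal_integral_eq_lintegral_ofReal (integrable_exp_neg_mul_sq hδ)
      (Filter.Eventually.of_forall fun t => (Real.exp_nonneg _))]
  rw [h1]

lemma rect_volume (S : ℝ) :
    volume {w : ℂ | w.re ∈ Set.Icc S (S+1) ∧ w.im ∈ Set.Icc 0 1} = 1 := by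
  have : {w : ℂ | w.re ∈ Set.Icc S (S+1) ∧ w.im ∈ Set.Icc 0 1}
      = Complex.measurableEquivRealProd ⁻¹' (Set.Icc S (S+1) ×ˢ Set.Icc 0 1) := by
    ext w; simp [Complex.measurableEquivRealProd, Set.mem_prod]; tauto
  rw [this, Complex.volume_preserving_equiv_real_prod.measure_preimage
    ((measurableSet_Icc.prod measurableSet_Icc).nullMeasurableSet),
    MeasureTheory.Measure.volume_eq_prod, Measure.prod_prod, Real.volume_Icc, Real.volume_Icc]
  norm_num


theorem stmt_18 {Ω : Type*} [MeasurableSpace Ω] (P : Measure Ω) [IsProbabilityMeasure P]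
    (x n : Ω → ℂ) (hx : Measurable x) (hn : Measurable n)
    (hindep : IndepFun x n P)
    (hdens : Measure.map n P = volume.withDensity
      (fun w => ENNReal.ofReal ((1 / (2 * π)) * Real.exp (-(‖w‖) ^ 2 / 2)))) :
    (∃ f : ℂ → ℝ, Measure.map (fun ω => x ω + n ω) P
        = volume.withDensity (fun y => ENNReal.ofReal (f y))) ∧
    (∀ f : ℂ → ℝ, Measure.map (fun ω => x ω + n ω) P
        = volume.withDensity (fun y => ENNReal.ofReal (f y)) →
      ∀ A : ℝ, 1 / 2 < A →
        ¬ ∃ C : ℝ, 0 < C ∧ ∃ M : ℝ, 0 < M ∧ ∀ y : ℂ, M ≤ ‖y‖ →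
            f y ≤ C * Real.exp (-A * (‖y‖) ^ 2)) := by
  constructor
  ·
    have hxn : Measurable fun ω => x ω + n ω := hx.add hn
    have hmapn_ac : Measure.map n P ≪ volume := by
      rw [hdens]; exact withDensity_absolutelyContinuous _ _
    have hprod : Measure.map (fun ω => (x ω, n ω)) P
        = (Measure.map x P).prod (Measure.map n P) :=
      (indepFun_iff_map_prod_eq_prod_map_map hx.aemeasurable hn.aemeasurable).mp hindep
    have hmap_sum : Measure.map (fun ω => x ω + n ω) P
        = Measure.map (fun p : ℂ × ℂ => p.1 + p.2) ((Measure.map x P).prod (Measure.map n P)) := by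
      rw [← hprod, Measure.map_map (by fun_prop) (hx.prodMk hn)]
      rfl
    have hac : Measure.map (fun ω => x ω + n ω) P ≪ volume := by
      refine Measure.AbsolutelyContinuous.mk fun s hs hvs => ?_
      rw [hmap_sum, Measure.map_apply (by fun_prop) hs,
        Measure.prod_apply (hs.preimage (by fun_prop))]
      have hz : ∀ a : ℂ, (Measure.map n P) (Prod.mk a ⁻¹' ((fun p : ℂ × ℂ => p.1 + p.2) ⁻¹' s)) = 0 := by
        intro a
        have he : Prod.mk a ⁻¹' ((fun p : ℂ × ℂ => p.1 + p.2) ⁻¹' s) = (fun b => a + b) ⁻¹' s := rfl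
        rw [he]
        refine hmapn_ac ?_
        rw [measure_preimage_add]
        exact hvs
      simp [hz]
    haveI : IsProbabilityMeasure (Measure.map (fun ω => x ω + n ω) P) :=
      Measure.isProbabilityMeasure_map hxn.aemeasurable
    refine ⟨fun y => ((Measure.map (fun ω => x ω + n ω) P).rnDeriv volume y).toReal, ?_⟩
    symm
    rw [withDensity_congr_ae (g := (Measure.map (fun ω => x ω + n ω) P).rnDeriv volume) ?_]
    · exact Measure.absolutelyContinuous_iff_withDensity_rnDeriv_eq.mp hac
    · filter_upwards [Measure.rnDeriv_lt_top (Measure.map (fun ω => x ω + n ω) P) volume] with y hy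
      exact ENNReal.ofReal_toReal hy.ne

  ·
    have hxn : Measurable fun ω => x ω + n ω := hx.add hn
    have habs : Measurable (fun w : ℂ => ‖w‖) := continuous_norm.measurable
    intro f hf A hA
    rintro ⟨C, hC, M, hM, hbound⟩
    -- constants
    set δ : ℝ := (A - 1/2)/2 with hδdef
    have hδ : 0 < δ := by simp only [hδdef]; linarith
    set A' : ℝ := A - δ with hA'def
    have hA' : 1/2 < A' := by simp only [hA'def, hδdef]; linarith
    have hA'pos : 0 < A' := by linarith
    set J : ℝ := ∫ t : ℝ, Real.exp (-δ * t ^ 2) with hJdef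
    have hJpos : 0 < J := by
      rw [hJdef, integral_gaussian δ]
      positivity
    -- choice of r
    obtain ⟨r, hr⟩ : ∃ r : ℕ, (1/2 : ℝ≥0∞) ≤ P (x ⁻¹' Metric.closedBall 0 r) := by
      have hmono : Monotone (fun k : ℕ => x ⁻¹' Metric.closedBall 0 k) := by
        intro i j hij
        exact Set.preimage_mono (Metric.closedBall_subset_closedBall (by exact_mod_cast hij))
      have hU : ⋃ k : ℕ, x ⁻¹' Metric.closedBall 0 k = Set.univ := by
        ext ω; simp only [Set.mem_iUnion, Set.mem_preimage, Metric.mem_closedBall,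
          dist_zero_right, Set.mem_univ, iff_true]
        exact exists_nat_ge ‖x ω‖
      have ht := tendsto_measure_iUnion_atTop (μ := P) hmono
      rw [hU, measure_univ] at ht
      have := (tendsto_order.1 ht).1 (1/2) (by norm_num)
      exact this.exists.imp fun k hk => hk.le
    -- the constant K0
    set K0 : ℝ := 4 * π * C * (J * J) with hK0def
    have hK0 : 0 < K0 := by positivity
    -- choose R
    set a : ℝ := A' - 1/2 with hadef
    have ha : 0 < a := by simp only [hadef]; linarith
    set c : ℝ := ((r:ℝ)+1)^2/2 + 1/2 + K0 with hcdef
    have hc : 0 < c := by positivity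
    set R : ℝ := max (max M 1) ((((r:ℝ)+1) + c) / a) with hRdef
    have hRM : M ≤ R := le_trans (le_max_left _ _) (le_max_left _ _)
    have hR1 : 1 ≤ R := le_trans (le_max_right _ _) (le_max_left _ _)
    have hR0 : 0 ≤ R := by linarith
    have hRa : ((r:ℝ)+1) + c ≤ a * R := by
      have : (((r:ℝ)+1) + c) / a ≤ R := le_max_right _ _
      calc ((r:ℝ)+1) + c = a * ((((r:ℝ)+1) + c) / a) := by field_simp
      _ ≤ a * R := by nlinarith
    set S : ℝ := R + r with hSdef
    have hS0 : 0 ≤ S := by positivity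
    set SR : Set ℂ := {y : ℂ | R ≤ ‖y‖} with hSRdef
    have hSRm : MeasurableSet SR := measurableSet_le measurable_const habs
    set Tn : Set ℂ := {w : ℂ | S ≤ ‖w‖} with hTndef
    have hTnm : MeasurableSet Tn := measurableSet_le measurable_const habs
    -- upper bound
    have hup : Measure.map (fun ω => x ω + n ω) P SR
        ≤ ENNReal.ofReal (C * Real.exp (-A' * R^2) * (J * J)) := by
      rw [hf, withDensity_apply _ hSRm]
      calc ∫⁻ y in SR, ENNReal.ofReal (f y) ∂volume
          ≤ ∫⁻ y in SR, ENNReal.ofReal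
              (C * Real.exp (-A' * R^2) * Real.exp (-δ * ‖y‖ ^ 2)) ∂volume := by
            refine setLIntegral_mono (by fun_prop) fun y hy => ?_
            refine ENNReal.ofReal_le_ofReal ?_
            have hy' : R ≤ ‖y‖ := hy
            have h1 : f y ≤ C * Real.exp (-A * ‖y‖ ^ 2) :=
              hbound y (le_trans hRM hy')
            refine h1.trans ?_
            rw [mul_assoc, ← Real.exp_add]
            refine mul_le_mul_of_nonneg_left (Real.exp_le_exp.2 ?_) hC.le
            have hy2 : R^2 ≤ ‖y‖ ^ 2 := by nlinarith
            have hAeq : A = A' + δ := by simp only [hA'def]; ring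
            nlinarith
        _ ≤ ∫⁻ y, ENNReal.ofReal
              (C * Real.exp (-A' * R^2) * Real.exp (-δ * ‖y‖ ^ 2)) ∂volume :=
            setLIntegral_le_lintegral _ _
        _ = ENNReal.ofReal (C * Real.exp (-A' * R^2))
              * ∫⁻ y : ℂ, ENNReal.ofReal (Real.exp (-δ * ‖y‖ ^ 2)) ∂volume := by
            rw [← lintegral_const_mul' _ _ ENNReal.ofReal_ne_top]
            congr 1; ext y
            rw [← ENNReal.ofReal_mul (by positivity)]
        _ = ENNReal.ofReal (C * Real.exp (-A' * R^2))
              * (ENNReal.ofReal J * ENNReal.ofReal J) := by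
            rw [gauss_lintegral_complex hδ]
        _ = ENNReal.ofReal (C * Real.exp (-A' * R^2) * (J * J)) := by
            rw [← ENNReal.ofReal_mul hJpos.le, ← ENNReal.ofReal_mul (by positivity)]
    -- lower bound on the n-tail
    have hlow_n : ENNReal.ofReal ((1/(2*π)) * Real.exp (-((S+1)^2+1)/2)) ≤ Measure.map n P Tn := by
      rw [hdens, withDensity_apply _ hTnm]
      set rect : Set ℂ := {w : ℂ | w.re ∈ Set.Icc S (S+1) ∧ w.im ∈ Set.Icc 0 1} with hrectdef
      have hsub : rect ⊆ Tn := by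
        rintro w ⟨⟨h1, _⟩, _⟩
        exact le_trans h1 (Complex.re_le_norm w)
      calc ENNReal.ofReal ((1/(2*π)) * Real.exp (-((S+1)^2+1)/2))
          = ENNReal.ofReal ((1/(2*π)) * Real.exp (-((S+1)^2+1)/2)) * volume rect := by
            rw [rect_volume, mul_one]
        _ = ∫⁻ _ in rect, ENNReal.ofReal ((1/(2*π)) * Real.exp (-((S+1)^2+1)/2)) ∂volume :=
            (setLIntegral_const _ _).symm
        _ ≤ ∫⁻ w in rect, ENNReal.ofReal
              ((1 / (2 * π)) * Real.exp (-(‖w‖) ^ 2 / 2)) ∂volume := by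
            refine setLIntegral_mono (by fun_prop) fun w hw => ?_
            refine ENNReal.ofReal_le_ofReal ?_
            obtain ⟨⟨h1, h2⟩, h3, h4⟩ := hw
            refine mul_le_mul_of_nonneg_left (Real.exp_le_exp.2 ?_) (by positivity)
            have : ‖w‖ ^ 2 = w.re ^ 2 + w.im ^ 2 := by
              rw [Complex.sq_norm, Complex.normSq_apply]; ring
            rw [this]
            nlinarith
        _ ≤ ∫⁻ w in Tn, ENNReal.ofReal
              ((1 / (2 * π)) * Real.exp (-(‖w‖) ^ 2 / 2)) ∂volume :=
            lintegral_mono_set hsub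
    -- lower bound on μ SR
    have hlow : ENNReal.ofReal ((1/(4*π)) * Real.exp (-((S+1)^2+1)/2))
        ≤ Measure.map (fun ω => x ω + n ω) P SR := by
      have hsub : x ⁻¹' Metric.closedBall 0 r ∩ n ⁻¹' Tn ⊆ (fun ω => x ω + n ω) ⁻¹' SR := by
        rintro ω ⟨h1, h2⟩
        simp only [Set.mem_preimage, Metric.mem_closedBall, dist_zero_right] at h1
        have h2' : S ≤ ‖n ω‖ := h2
        have hnle : ‖n ω‖ ≤ ‖x ω + n ω‖ + ‖x ω‖ := by
          have := norm_sub_le (x ω + n ω) (x ω)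
          simpa using this
        have hxr : ‖x ω‖ ≤ r := by simpa using h1
        show R ≤ ‖x ω + n ω‖
        simp only [hSdef] at h2'
        linarith
      rw [Measure.map_apply hxn hSRm]
      refine le_trans ?_ (measure_mono hsub)
      rw [hindep.measure_inter_preimage_eq_mul _ _ measurableSet_closedBall hTnm]
      have h2 : ENNReal.ofReal ((1/(2*π)) * Real.exp (-((S+1)^2+1)/2))
          ≤ P (n ⁻¹' Tn) := by
        rw [← Measure.map_apply hn hTnm]; exact hlow_n
      calc ENNReal.ofReal ((1/(4*π)) * Real.exp (-((S+1)^2+1)/2))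
          = ENNReal.ofReal (1/2) * ENNReal.ofReal ((1/(2*π)) * Real.exp (-((S+1)^2+1)/2)) := by
            rw [← ENNReal.ofReal_mul (by norm_num)]
            congr 1; ring
        _ ≤ P (x ⁻¹' Metric.closedBall 0 r) * P (n ⁻¹' Tn) := by
            refine mul_le_mul' ?_ h2
            rw [ENNReal.ofReal_div_of_pos (by norm_num)]
            simpa using hr
    -- combine
    have hcomb : (1/(4*π)) * Real.exp (-((S+1)^2+1)/2) ≤ C * Real.exp (-A' * R^2) * (J * J) := by
      have := le_trans hlow hup
      rw [ENNReal.ofReal_le_ofReal_iff (by positivity)] at this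
      exact this
    -- derive contradiction
    have hπ : 0 < π := Real.pi_pos
    have h4π : (0:ℝ) < 4 * π := by positivity
    have hexp' : Real.exp (-((S+1)^2+1)/2) ≤ C * Real.exp (-A' * R^2) * (J * J) * (4*π) := by
      refine (div_le_iff₀ h4π).mp ?_
      calc Real.exp (-((S+1)^2+1)/2) / (4*π) = (1/(4*π)) * Real.exp (-((S+1)^2+1)/2) := by ring
        _ ≤ _ := hcomb
    have hexp : Real.exp (-((S+1)^2+1)/2) ≤ K0 * Real.exp (-A' * R^2) := by
      rw [hK0def]; nlinarith [hexp']
    have hfinal : Real.exp (A' * R^2 - ((S+1)^2+1)/2) ≤ K0 := by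
      have h1 : Real.exp (A' * R^2 - ((S+1)^2+1)/2)
          = Real.exp (A' * R^2) * Real.exp (-((S+1)^2+1)/2) := by
        rw [← Real.exp_add]; ring_nf
      rw [h1]
      calc Real.exp (A' * R^2) * Real.exp (-((S+1)^2+1)/2)
          ≤ Real.exp (A' * R^2) * (K0 * Real.exp (-A' * R^2)) :=
            mul_le_mul_of_nonneg_left hexp (Real.exp_pos _).le
        _ = K0 * (Real.exp (A' * R^2) * Real.exp (-A' * R^2)) := by ring
        _ = K0 := by rw [← Real.exp_add]; simp
    have hlin := Real.add_one_le_exp (A' * R^2 - ((S+1)^2+1)/2)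
    clear_value δ A' J K0 a c R S SR Tn
    -- numeric: A'*R^2 - ((S+1)^2+1)/2 + 1 > K0
    have hS1 : S + 1 = R + ((r:ℝ) + 1) := by simp only [hSdef]; ring
    have hA'eq : A' = a + 1/2 := by simp only [hadef]; ring
    have hsq : (S+1)^2 = R^2 + 2*R*((r:ℝ)+1) + ((r:ℝ)+1)^2 := by rw [hS1]; ring
    have hAR : A' * R^2 = a*R^2 + R^2/2 := by rw [hA'eq]; ring
    have haR2 : ((r:ℝ)+1)*R + c*R ≤ a*R^2 := by nlinarith [mul_le_mul_of_nonneg_right hRa hR0]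
    have hcR : c ≤ c*R := by nlinarith [mul_nonneg hc.le (sub_nonneg.mpr hR1)]
    have hchain : A' * R^2 - ((S+1)^2+1)/2 + 1 ≤ K0 := hlin.trans hfinal
    have hceq : c = ((r:ℝ)+1)^2/2 + 1/2 + K0 := hcdef
    linarith [hchain, hsq, hAR, haR2, hcR, hceq.le, hceq.ge]
end
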